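/- Let M be an n × n 0,1 matrix. Define the graph H on vertex set [n] × [n] (loops allowed) in which vertices (i₁,j₁) and (i₂,j₂) (not necessarily distinct) are adjacent iff M_{i₁,j₂} = 1 or M_{i₂,j₁} = 1, and let H₀ be the subgraph of H induced on V₀ = {(i,j) : M_{i,j} = 0}, which is a simple graph. Then χ(H₀) ≥ Rbool(complement of M). -/

import Mathlib

/-- A cover of the ones of a `0,1` matrix `M` by `k` monochromatic combinatorial
rectangles `A t × B t`. -/
def OnesCover {α β : Type*} (M : α → β → Bool) (k : ℕ)
    (A : Fin k → Set α) (B : Fin k → Set β) : Prop :=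
  (∀ t, ∀ x ∈ A t, ∀ y ∈ B t, M x y = true) ∧
  ∀ x y, M x y = true → ∃ t, x ∈ A t ∧ y ∈ B t

/-- The Boolean rank of a `0,1` matrix. -/
noncomputable def Rbool {α β : Type*} (M : α → β → Bool) : ℕ :=
  sInf {k | ∃ A B, OnesCover M k A B}

/-- The chromatic number of a graph: the least number of colors of a proper coloring. -/
noncomputable def chromNum {V : Type*} (G : SimpleGraph V) : ℕ :=
  sInf {k | G.Colorable k}

/-- Let `H` be the graph (loops allowed) on `[n] × [n]` where `(i₁,j₁)` and
`(i₂,j₂)` are adjacent iff `M_{i₁,j₂} = 1` or `M_{i₂,j₁} = 1`, and let `H₀` be the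
(simple) subgraph of `H` induced on `V₀ = {(i,j) : M_{i,j} = 0}`. Then
`χ(H₀) ≥ Rbool(complement M)`. -/
theorem stmt13 (n : ℕ) (M : Fin n → Fin n → Bool) :
    Rbool (fun i j => !(M i j)) ≤
      chromNum (SimpleGraph.fromRel
        fun p q : {p : Fin n × Fin n // M p.1 p.2 = false} =>
          M p.1.1 q.1.2 = true ∨ M q.1.1 p.1.2 = true) := by
  set V := {p : Fin n × Fin n // M p.1 p.2 = false}
  set G : SimpleGraph V := SimpleGraph.fromRel
    (fun p q : V => M p.1.1 q.1.2 = true ∨ M q.1.1 p.1.2 = true) with hG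
  have hne : {k | G.Colorable k}.Nonempty :=
    ⟨Fintype.card V, G.colorable_of_fintype⟩
  have hcol : G.Colorable (chromNum G) := Nat.sInf_mem hne
  obtain ⟨C⟩ := hcol
  apply Nat.sInf_le
  refine ⟨fun t => {i | ∃ p : V, C p = t ∧ p.1.1 = i},
          fun t => {j | ∃ p : V, C p = t ∧ p.1.2 = j}, ?_, ?_⟩
  · rintro t x ⟨p, hp, rfl⟩ y ⟨q, hq, rfl⟩
    by_cases hpq : p = q
    · subst hpq
      simp [p.2]
    · have hadj : ¬ G.Adj p q := by
        intro h
        exact C.valid h (hp.trans hq.symm)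
      rw [hG, SimpleGraph.fromRel_adj] at hadj
      push_neg at hadj
      have := hadj hpq
      simp [this.1.1]
  · intro x y hxy
    have hM : M x y = false := by
      simpa using hxy
    refine ⟨C ⟨(x, y), hM⟩, ⟨⟨(x, y), hM⟩, rfl, rfl⟩, ⟨⟨(x, y), hM⟩, rfl, rfl⟩⟩
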